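/- For integers 0 ≤ k ≤ n and α, β > -1, the squared norm of the alternative Jacobi polynomial is ∫₀¹ x^α (1-x)^β (P_{nk}^{(α,β)}(x))² dx = (1/(α+2k+1)) · Γ(α+n+k+2) Γ(β+n-k+1) / ((n-k)! Γ(α+β+n+k+2)). -/

import Mathlib

open Real MeasureTheory

open Set Filter Topology

/-- Falling factorial `(a)_m = a (a-1) ⋯ (a-m+1)` for real `a`. -/
noncomputable def ffall (a : ℝ) (m : ℕ) : ℝ := ∏ i ∈ Finset.range m, (a - i)



lemma ffall_zero (a : ℝ) : ffall a 0 = 1 := Finset.prod_range_zero _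

lemma ffall_succ (a : ℝ) (s : ℕ) : ffall a (s + 1) = ffall a s * (a - s) :=
  Finset.prod_range_succ _ _

lemma ffall_natCast_eq_zero {r s : ℕ} (h : r < s) : ffall (r : ℝ) s = 0 :=
  Finset.prod_eq_zero (Finset.mem_range.2 h) (by simp)

/-- Integration by parts on the open interval (0,1) with limits at the endpoints. -/
lemma myIBP {u v u' v' : ℝ → ℝ} {a' b' : ℝ}
    (hu : ∀ x ∈ Ioo (0:ℝ) 1, HasDerivAt u (u' x) x)
    (hv : ∀ x ∈ Ioo (0:ℝ) 1, HasDerivAt v (v' x) x)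
    (huv : IntervalIntegrable (fun x => u' x * v x + u x * v' x) volume 0 1)
    (h0 : Tendsto (fun x => u x * v x) (𝓝[>] (0:ℝ)) (𝓝 a'))
    (h1 : Tendsto (fun x => u x * v x) (𝓝[<] (1:ℝ)) (𝓝 b')) :
    ∫ x in (0:ℝ)..1, (u' x * v x + u x * v' x) = b' - a' := by
  set g : ℝ → ℝ := fun x => u x * v x with hg
  set f : ℝ → ℝ := Function.update (Function.update g 0 a') 1 b' with hf
  have hne : (1:ℝ) ≠ 0 := one_ne_zero
  have hfx : ∀ x ∈ Ioo (0:ℝ) 1, f x = g x := by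
    intro x hx
    rw [hf, Function.update_of_ne (ne_of_lt hx.2), Function.update_of_ne (ne_of_gt hx.1)]
  have hf0 : f 0 = a' := by
    rw [hf, Function.update_of_ne hne.symm, Function.update_self]
  have hf1 : f 1 = b' := by rw [hf, Function.update_self]
  have ht0 : Tendsto f (𝓝[>] (0:ℝ)) (𝓝 a') := by
    apply h0.congr'
    filter_upwards [Ioo_mem_nhdsGT_of_mem (by constructor <;> norm_num : (0:ℝ) ∈ Ico (0:ℝ) 1)]
      with y hy
    exact (hfx y hy).symm
  have ht1 : Tendsto f (𝓝[<] (1:ℝ)) (𝓝 b') := by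
    apply h1.congr'
    filter_upwards [Ioo_mem_nhdsLT_of_mem (by constructor <;> norm_num : (1:ℝ) ∈ Ioc (0:ℝ) 1)]
      with y hy
    exact (hfx y hy).symm
  have hcont : ContinuousOn f (Icc 0 1) := by
    intro x hx
    rcases eq_or_lt_of_le hx.1 with h0x | h0x
    · subst h0x
      rw [← continuousWithinAt_diff_self, ContinuousWithinAt, hf0]
      refine ht0.mono_left (nhdsWithin_mono _ ?_)
      intro y hy
      exact lt_of_le_of_ne hy.1.1 (Ne.symm hy.2)
    · rcases eq_or_lt_of_le hx.2 with h1x | h1x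
      · subst h1x
        rw [← continuousWithinAt_diff_self, ContinuousWithinAt, hf1]
        refine ht1.mono_left (nhdsWithin_mono _ ?_)
        intro y hy
        exact lt_of_le_of_ne hy.1.2 hy.2
      · have : ContinuousAt f x := by
          have hd := (hu x ⟨h0x, h1x⟩).mul (hv x ⟨h0x, h1x⟩)
          apply hd.continuousAt.congr
          filter_upwards [Ioo_mem_nhds h0x h1x] with y hy
          exact (hfx y hy).symm
        exact this.continuousWithinAt
  have hderiv : ∀ x ∈ Ioo (0:ℝ) 1, HasDerivWithinAt f (u' x * v x + u x * v' x) (Ioi x) x := by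
    intro x hx
    have hd := (hu x hx).mul (hv x hx)
    have : HasDerivAt f (u' x * v x + u x * v' x) x := by
      apply hd.congr_of_eventuallyEq
      filter_upwards [Ioo_mem_nhds hx.1 hx.2] with y hy
      exact hfx y hy
    exact this.hasDerivWithinAt
  have := intervalIntegral.integral_eq_sub_of_hasDeriv_right_of_le (by norm_num : (0:ℝ) ≤ 1)
    hcont hderiv huv
  rw [this, hf0, hf1]


lemma betaInt_cong {p q : ℝ} (x : ℝ) (hx : x ∈ Icc (0:ℝ) 1) :
    (x:ℂ) ^ ((((p+1:ℝ)):ℂ) - 1) * (1 - (x:ℂ)) ^ ((((q+1:ℝ)):ℂ) - 1)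
      = ((x ^ p * (1 - x) ^ q : ℝ) : ℂ) := by
  have h1 : (((p+1:ℝ)):ℂ) - 1 = ((p:ℝ):ℂ) := by push_cast; ring
  have h2 : (((q+1:ℝ)):ℂ) - 1 = ((q:ℝ):ℂ) := by push_cast; ring
  have h3 : (1:ℂ) - (x:ℂ) = ((1-x:ℝ):ℂ) := by push_cast; ring
  rw [h1, h2, h3, ← Complex.ofReal_cpow hx.1,
    ← Complex.ofReal_cpow (by linarith [hx.2] : (0:ℝ) ≤ 1 - x), ← Complex.ofReal_mul]

lemma betaInt_aeeq (p q : ℝ) :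
    (fun x : ℝ => (x:ℂ) ^ ((((p+1:ℝ)):ℂ) - 1) * (1 - (x:ℂ)) ^ ((((q+1:ℝ)):ℂ) - 1))
      =ᶠ[ae (volume.restrict (Set.uIoc (0:ℝ) 1))] (fun x : ℝ => ((x ^ p * (1 - x) ^ q : ℝ) : ℂ)) := by
  filter_upwards [ae_restrict_mem measurableSet_uIoc] with x hx
  rw [Set.uIoc_of_le (by norm_num : (0:ℝ) ≤ 1)] at hx
  exact betaInt_cong x ⟨hx.1.le, hx.2⟩

lemma betaInt_integrable {p q : ℝ} (hp : -1 < p) (hq : -1 < q) :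
    IntervalIntegrable (fun x : ℝ => x ^ p * (1 - x) ^ q) volume 0 1 := by
  have hc := Complex.betaIntegral_convergent (u := ((p+1:ℝ):ℂ)) (v := ((q+1:ℝ):ℂ))
    (by simp; linarith) (by simp; linarith)
  have hc2 : IntervalIntegrable
      (fun x : ℝ => ((x ^ p * (1 - x) ^ q : ℝ) : ℂ)) volume 0 1 := hc.congr_ae (betaInt_aeeq p q)
  constructor
  · exact hc2.1.re
  · exact hc2.2.re

lemma betaInt_value {p q : ℝ} (hp : -1 < p) (hq : -1 < q) :
    ∫ x in (0:ℝ)..1, x ^ p * (1 - x) ^ q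
      = Real.Gamma (p+1) * Real.Gamma (q+1) / Real.Gamma (p+q+2) := by
  have hG := Complex.Gamma_mul_Gamma_eq_betaIntegral
    (s := ((p+1:ℝ):ℂ)) (t := ((q+1:ℝ):ℂ)) (by simp; linarith) (by simp; linarith)
  rw [Complex.betaIntegral] at hG
  rw [intervalIntegral.integral_congr (fun x hx => betaInt_cong x
    (by rwa [Set.uIcc_of_le (by norm_num : (0:ℝ) ≤ 1)] at hx))] at hG
  rw [intervalIntegral.integral_ofReal] at hG
  have hst : ((p+1:ℝ):ℂ) + ((q+1:ℝ):ℂ) = ((p+q+2:ℝ):ℂ) := by push_cast; ring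
  rw [hst, Complex.Gamma_ofReal, Complex.Gamma_ofReal, Complex.Gamma_ofReal,
    ← Complex.ofReal_mul, ← Complex.ofReal_mul] at hG
  have := Complex.ofReal_inj.mp hG
  have hpos : 0 < Real.Gamma (p+q+2) := Real.Gamma_pos_of_pos (by linarith)
  field_simp [hpos.ne'] at this ⊢
  linarith [this]

lemma tend_zero_left {P Q : ℝ} (hP : 0 < P) :
    Tendsto (fun x : ℝ => x ^ P * (1-x) ^ Q) (𝓝[>] (0:ℝ)) (𝓝 0) := by
  have h1 : Tendsto (fun x : ℝ => x ^ P) (𝓝 (0:ℝ)) (𝓝 0) := by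
    have := (Real.continuousAt_rpow_const 0 P (Or.inr hP.le))
    simpa [Real.zero_rpow hP.ne'] using this.tendsto
  have h2 : Tendsto (fun x : ℝ => (1-x) ^ Q) (𝓝 (0:ℝ)) (𝓝 1) := by
    have hc : ContinuousAt (fun y : ℝ => y ^ Q) 1 :=
      Real.continuousAt_rpow_const 1 Q (Or.inl one_ne_zero)
    have : Tendsto (fun x : ℝ => 1 - x) (𝓝 (0:ℝ)) (𝓝 1) := by
      simpa using (tendsto_const_nhds (x := (1:ℝ))).sub (tendsto_id (x := 𝓝 (0:ℝ)))
    simpa [Real.one_rpow, Function.comp_def] using hc.tendsto.comp this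
  simpa using ((h1.mul h2).mono_left nhdsWithin_le_nhds)

lemma tend_zero_right {P Q : ℝ} (hQ : 0 < Q) :
    Tendsto (fun x : ℝ => x ^ P * (1-x) ^ Q) (𝓝[<] (1:ℝ)) (𝓝 0) := by
  have h1 : Tendsto (fun x : ℝ => x ^ P) (𝓝 (1:ℝ)) (𝓝 1) := by
    have hc : ContinuousAt (fun y : ℝ => y ^ P) 1 :=
      Real.continuousAt_rpow_const 1 P (Or.inl one_ne_zero)
    simpa [Real.one_rpow] using hc.tendsto
  have h2 : Tendsto (fun x : ℝ => (1-x) ^ Q) (𝓝 (1:ℝ)) (𝓝 0) := by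
    have hc : Tendsto (fun y : ℝ => y ^ Q) (𝓝 0) (𝓝 0) := by
      have := (Real.continuousAt_rpow_const 0 Q (Or.inr hQ.le))
      simpa [Real.zero_rpow hQ.ne'] using this.tendsto
    have : Tendsto (fun x : ℝ => 1 - x) (𝓝 (1:ℝ)) (𝓝 0) := by
      simpa using (tendsto_const_nhds (x := (1:ℝ))).sub (tendsto_id (x := 𝓝 (1:ℝ)))
    exact hc.comp this
  simpa using ((h1.mul h2).mono_left nhdsWithin_le_nhds)


noncomputable def Wcoef (a b : ℝ) (j r : ℕ) : ℝ :=
  (j.choose r : ℝ) * ffall a r * (-1)^(j-r) * ffall b (j-r)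

noncomputable def Wf (a b : ℝ) (j : ℕ) (x : ℝ) : ℝ :=
  ∑ r ∈ Finset.range (j+1), Wcoef a b j r * (x ^ (a - r) * (1-x) ^ (b - ((j-r:ℕ):ℝ)))

lemma Wf_hasDerivAt (a b : ℝ) (j : ℕ) {x : ℝ} (hx : x ∈ Set.Ioo (0:ℝ) 1) :
    HasDerivAt (Wf a b j) (Wf a b (j+1) x) x := by
  have hx0 : x ≠ 0 := ne_of_gt hx.1
  have h1x : (1:ℝ) - x ≠ 0 := sub_ne_zero.mpr (ne_of_gt hx.2)
  have hterm : ∀ r : ℕ, HasDerivAt (fun y : ℝ => y ^ (a - r) * (1-y) ^ (b - ((j-r:ℕ):ℝ)))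
      ((a - r) * x ^ (a - (r:ℝ) - 1) * (1-x) ^ (b - ((j-r:ℕ):ℝ))
        - (b - ((j-r:ℕ):ℝ)) * (x ^ (a - (r:ℝ)) * (1-x) ^ (b - ((j-r:ℕ):ℝ) - 1))) x := by
    intro r
    have h1 : HasDerivAt (fun y : ℝ => y ^ (a - (r:ℝ))) ((a - r) * x ^ (a - (r:ℝ) - 1)) x :=
      Real.hasDerivAt_rpow_const (Or.inl hx0)
    have hin : HasDerivAt (fun y : ℝ => 1 - y) (-1) x := by
      simpa using (hasDerivAt_const x (1:ℝ)).fun_sub (hasDerivAt_id x)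
    have h2 : HasDerivAt (fun y : ℝ => (1-y) ^ (b - ((j-r:ℕ):ℝ)))
        (-((b - ((j-r:ℕ):ℝ)) * (1-x) ^ (b - ((j-r:ℕ):ℝ) - 1))) x := by
      have := (Real.hasDerivAt_rpow_const (x := 1 - x)
        (p := b - ((j-r:ℕ):ℝ)) (Or.inl h1x)).comp x hin
      convert this using 1
      all_goals first | rfl | ring
    have := h1.mul h2
    convert this using 1
    all_goals first | rfl | ring
  have hsum : HasDerivAt (Wf a b j)
      (∑ r ∈ Finset.range (j+1), Wcoef a b j r *
        ((a - r) * x ^ (a - (r:ℝ) - 1) * (1-x) ^ (b - ((j-r:ℕ):ℝ))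
          - (b - ((j-r:ℕ):ℝ)) * (x ^ (a - (r:ℝ)) * (1-x) ^ (b - ((j-r:ℕ):ℝ) - 1)))) x := by
    unfold Wf
    exact HasDerivAt.fun_sum (fun r _ => ((hterm r).const_mul _))
  convert hsum using 1
  -- Now the algebraic identity
  set T : ℕ → ℝ := fun r => x ^ (a - r) * (1-x) ^ (b - (((j+1)-r:ℕ):ℝ)) with hT
  set c : ℕ → ℝ := fun r => Wcoef a b j r with hc
  set P : ℕ → ℝ := fun r => c r * (a - r) * T (r+1) with hP
  set Q : ℕ → ℝ := fun r => -(c r * (b - ((j-r:ℕ):ℝ))) * T r with hQ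
  have hsplit : ∀ r ∈ Finset.range (j+1),
      Wcoef a b j r * ((a - r) * x ^ (a - (r:ℝ) - 1) * (1-x) ^ (b - ((j-r:ℕ):ℝ))
          - (b - ((j-r:ℕ):ℝ)) * (x ^ (a - (r:ℝ)) * (1-x) ^ (b - ((j-r:ℕ):ℝ) - 1)))
        = P r + Q r := by
    intro r hr
    have hr' : r ≤ j := Nat.lt_succ_iff.mp (Finset.mem_range.mp hr)
    have e1 : a - (r:ℝ) - 1 = a - ((r+1:ℕ):ℝ) := by push_cast; ring
    have e2 : b - ((j-r:ℕ):ℝ) = b - (((j+1)-(r+1):ℕ):ℝ) := by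
      rw [Nat.succ_sub_succ]
    have e3 : b - ((j-r:ℕ):ℝ) - 1 = b - (((j+1)-r:ℕ):ℝ) := by
      have : (j+1)-r = (j-r)+1 := by omega
      rw [this]; push_cast; ring
    simp only [hP, hQ, hT, hc]
    rw [Nat.succ_sub_succ j r, ← e1, ← e3]
    ring
  have hQtop : Q (j+1) = 0 := by
    simp [hQ, hc, Wcoef, Nat.choose_eq_zero_of_lt (Nat.lt_succ_self j)]
  have hmatch : ∀ r ∈ Finset.range (j+1),
      P r + Q (r+1) = Wcoef a b (j+1) (r+1) * T (r+1) := by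
    intro r hr
    have hr' : r ≤ j := Nat.lt_succ_iff.mp (Finset.mem_range.mp hr)
    have hchoose : (((j+1).choose (r+1) : ℕ) : ℝ) = (j.choose r : ℝ) + (j.choose (r+1) : ℝ) := by
      rw [Nat.choose_succ_succ]; push_cast; ring
    have hcoefid : Wcoef a b (j+1) (r+1)
        = Wcoef a b j r * (a - r) - Wcoef a b j (r+1) * (b - ((j-(r+1):ℕ):ℝ)) := by
      rcases eq_or_lt_of_le hr' with heq | hlt
      · subst heq
        simp [Wcoef, Nat.succ_sub_succ, Nat.sub_self, ffall_succ, ffall_zero,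
          Nat.choose_eq_zero_of_lt (Nat.lt_succ_self r), Nat.choose_self]
      · obtain ⟨s, hs⟩ : ∃ s, j - r = s + 1 := ⟨j - r - 1, by omega⟩
        have hs2 : j - (r+1) = s := by omega
        unfold Wcoef
        rw [Nat.succ_sub_succ, hchoose, hs, hs2, ffall_succ a r, ffall_succ b s]
        ring
    simp only [hP, hQ, hc]
    rw [hcoefid]
    ring
  have hQ0 : Q 0 = Wcoef a b (j+1) 0 * T 0 := by
    simp only [hQ, hc]
    unfold Wcoef
    simp only [Nat.sub_zero, Nat.choose_zero_right, ffall_zero, Nat.cast_one]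
    rw [ffall_succ b j]
    ring
  have key : ∑ r ∈ Finset.range (j+1), (P r + Q r)
      = ∑ r ∈ Finset.range (j+2), Wcoef a b (j+1) r * T r := by
    rw [Finset.sum_add_distrib]
    have h1 : ∑ r ∈ Finset.range (j+1), Q r = ∑ r ∈ Finset.range (j+2), Q r := by
      rw [show ∑ r ∈ Finset.range (j+2), Q r = ∑ r ∈ Finset.range (j+1), Q r + Q (j+1)
        from Finset.sum_range_succ Q (j+1), hQtop, add_zero]
    rw [h1, Finset.sum_range_succ' Q (j+1), Finset.sum_range_succ'
      (fun r => Wcoef a b (j+1) r * T r) (j+1), ← add_assoc, ← Finset.sum_add_distrib]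
    rw [Finset.sum_congr rfl hmatch, hQ0]
  rw [Finset.sum_congr rfl hsplit, key]
  rfl


lemma Wcoef_zero (a b : ℝ) : Wcoef a b 0 0 = 1 := by simp [Wcoef, ffall_zero]

lemma Wf_zero (a b : ℝ) (x : ℝ) : Wf a b 0 x = x ^ a * (1-x) ^ b := by
  simp [Wf, Wcoef_zero]

lemma iter_eq_Wf (a b : ℝ) (i : ℕ) {x : ℝ} (hx : x ∈ Set.Ioo (0:ℝ) 1) :
    iteratedDeriv i (fun y : ℝ => y ^ a * (1 - y) ^ b) x = Wf a b i x := by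
  induction i generalizing x with
  | zero => rw [iteratedDeriv_zero, Wf_zero]
  | succ i ih =>
    rw [iteratedDeriv_succ]
    have heq : iteratedDeriv i (fun y : ℝ => y ^ a * (1 - y) ^ b) =ᶠ[𝓝 x] Wf a b i := by
      filter_upwards [Ioo_mem_nhds hx.1 hx.2] with y hy
      exact ih hy
    rw [heq.deriv_eq, (Wf_hasDerivAt a b i hx).deriv]


noncomputable def Hf (A B : ℝ) (m j : ℕ) (x : ℝ) : ℝ :=
  ∑ r ∈ Finset.range (m+1), (Wcoef A B m r / m.factorial) * Wf ((m:ℝ) - r - 1) r j x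

/-- combine two monomials on (0,1) -/
lemma mono_mul_mono {c1 E1 F1 c2 E2 F2 : ℝ} {x : ℝ} (hx : x ∈ Ioo (0:ℝ) 1) :
    (c1 * (x^E1 * (1-x)^F1)) * (c2 * (x^E2 * (1-x)^F2))
      = (c1*c2) * (x^(E1+E2) * (1-x)^(F1+F2)) := by
  rw [Real.rpow_add hx.1, Real.rpow_add (by linarith [hx.2] : (0:ℝ) < 1 - x)]
  ring

lemma mono_mul_integrable {c1 E1 F1 c2 E2 F2 : ℝ}
    (h : c1 * c2 = 0 ∨ (-1 < E1+E2 ∧ -1 < F1+F2)) :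
    IntervalIntegrable (fun x : ℝ =>
      (c1 * (x^E1 * (1-x)^F1)) * (c2 * (x^E2 * (1-x)^F2))) volume 0 1 := by
  have base : IntervalIntegrable
      (fun x : ℝ => (c1*c2) * (x^(E1+E2) * (1-x)^(F1+F2))) volume 0 1 := by
    rcases h with h | ⟨h1, h2⟩
    · rw [h]; simpa using intervalIntegrable_const (c := (0:ℝ)) (μ := volume) (a := 0) (b := 1)
    · exact (betaInt_integrable h1 h2).const_mul _
  rw [intervalIntegrable_iff] at base ⊢
  rw [uIoc_of_le (by norm_num : (0:ℝ) ≤ 1)] at base ⊢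
  rw [integrableOn_Ioc_iff_integrableOn_Ioo] at base ⊢
  exact base.congr_fun (fun x hx => (mono_mul_mono hx).symm) measurableSet_Ioo

lemma mono_mul_tendsto_left {c1 E1 F1 c2 E2 F2 : ℝ} (h : c1 * c2 = 0 ∨ 0 < E1+E2) :
    Tendsto (fun x : ℝ => (c1 * (x^E1 * (1-x)^F1)) * (c2 * (x^E2 * (1-x)^F2)))
      (𝓝[>] (0:ℝ)) (𝓝 0) := by
  have base : Tendsto (fun x : ℝ => (c1*c2) * (x^(E1+E2) * (1-x)^(F1+F2)))
      (𝓝[>] (0:ℝ)) (𝓝 0) := by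
    rcases h with h | h
    · rw [h]; simpa using tendsto_const_nhds
    · simpa using (tend_zero_left (Q := F1+F2) h).const_mul (c1*c2)
  apply base.congr'
  filter_upwards [Ioo_mem_nhdsGT_of_mem (by constructor <;> norm_num : (0:ℝ) ∈ Ico (0:ℝ) 1)]
    with x hx
  exact (mono_mul_mono hx).symm

lemma mono_mul_tendsto_right {c1 E1 F1 c2 E2 F2 : ℝ} (h : c1 * c2 = 0 ∨ 0 < F1+F2) :
    Tendsto (fun x : ℝ => (c1 * (x^E1 * (1-x)^F1)) * (c2 * (x^E2 * (1-x)^F2)))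
      (𝓝[<] (1:ℝ)) (𝓝 0) := by
  have base : Tendsto (fun x : ℝ => (c1*c2) * (x^(E1+E2) * (1-x)^(F1+F2)))
      (𝓝[<] (1:ℝ)) (𝓝 0) := by
    rcases h with h | h
    · rw [h]; simpa using tendsto_const_nhds
    · simpa using (tend_zero_right (P := E1+E2) h).const_mul (c1*c2)
  apply base.congr'
  filter_upwards [Ioo_mem_nhdsLT_of_mem (by constructor <;> norm_num : (1:ℝ) ∈ Ioc (0:ℝ) 1)]
    with x hx
  exact (mono_mul_mono hx).symm

lemma HW_expand (A B : ℝ) (m i j : ℕ) (x : ℝ) :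
    Hf A B m j x * Wf A B i x
      = ∑ r ∈ Finset.range (m+1), ∑ l ∈ Finset.range (j+1), ∑ s ∈ Finset.range (i+1),
          ((Wcoef A B m r / m.factorial) * Wcoef ((m:ℝ)-r-1) r j l
             * (x ^ (((m:ℝ)-r-1) - l) * (1-x) ^ ((r:ℝ) - ((j-l:ℕ):ℝ))))
          * (Wcoef A B i s * (x ^ (A - s) * (1-x) ^ (B - ((i-s:ℕ):ℝ)))) := by
  unfold Hf Wf
  simp only [Finset.sum_mul, Finset.mul_sum]
  rw [Finset.sum_comm]
  apply Finset.sum_congr rfl; intro r _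
  rw [Finset.sum_comm]
  apply Finset.sum_congr rfl; intro l _
  apply Finset.sum_congr rfl; intro s _
  ring

lemma Wcoef_ne_imp {a : ℝ} {r j l : ℕ} (h : Wcoef a (r:ℝ) j l ≠ 0) : j - l ≤ r := by
  by_contra hc
  push_neg at hc
  exact h (by unfold Wcoef; rw [ffall_natCast_eq_zero hc, mul_zero])

lemma intervalIntegrable_finsum {ι : Type*} (s : Finset ι) (f : ι → ℝ → ℝ)
    (h : ∀ i ∈ s, IntervalIntegrable (f i) volume 0 1) :
    IntervalIntegrable (fun x => ∑ i ∈ s, f i x) volume 0 1 := by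
  simp only [intervalIntegrable_iff] at h ⊢
  exact integrable_finset_sum s (fun i hi => h i hi)

lemma HW_integrable (A B : ℝ) (m i j : ℕ) (hE : -1 < A - i - j - 1) (hF : -1 < B - i) :
    IntervalIntegrable (fun x => Hf A B m j x * Wf A B i x) volume 0 1 := by
  have hexp : (fun x => Hf A B m j x * Wf A B i x) = fun x =>
      ∑ r ∈ Finset.range (m+1), ∑ l ∈ Finset.range (j+1), ∑ s ∈ Finset.range (i+1),
          ((Wcoef A B m r / m.factorial) * Wcoef ((m:ℝ)-r-1) r j l
             * (x ^ (((m:ℝ)-r-1) - l) * (1-x) ^ ((r:ℝ) - ((j-l:ℕ):ℝ))))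
          * (Wcoef A B i s * (x ^ (A - s) * (1-x) ^ (B - ((i-s:ℕ):ℝ)))) :=
    funext (HW_expand A B m i j)
  rw [hexp]
  apply intervalIntegrable_finsum; intro r hr
  apply intervalIntegrable_finsum; intro l hl
  apply intervalIntegrable_finsum; intro s hs
  rw [Finset.mem_range, Nat.lt_succ_iff] at hr hl hs
  set c1 : ℝ := (Wcoef A B m r / m.factorial) * Wcoef ((m:ℝ)-r-1) r j l with hc1
  set c2 : ℝ := Wcoef A B i s with hc2
  by_cases hc : c1 * c2 = 0
  · exact mono_mul_integrable (Or.inl hc)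
  · have hw : Wcoef ((m:ℝ)-r-1) (r:ℝ) j l ≠ 0 := fun h => hc (by rw [hc1, h]; ring)
    have hjl : j - l ≤ r := Wcoef_ne_imp hw
    have h1 : ((j-l:ℕ):ℝ) ≤ (r:ℝ) := Nat.cast_le.2 hjl
    have h2 : ((i-s:ℕ):ℝ) ≤ (i:ℝ) := Nat.cast_le.2 (Nat.sub_le i s)
    have h3 : (r:ℝ) ≤ m := Nat.cast_le.2 hr
    have h4 : (l:ℝ) ≤ j := Nat.cast_le.2 hl
    have h5 : (s:ℝ) ≤ i := Nat.cast_le.2 hs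
    refine mono_mul_integrable (Or.inr ⟨?_, ?_⟩) <;> linarith

lemma HW_tendsto_left (A B : ℝ) (m i j : ℕ) (hE : 0 < A - i - j - 1) :
    Tendsto (fun x => Hf A B m j x * Wf A B i x) (𝓝[>] (0:ℝ)) (𝓝 0) := by
  have hexp : (fun x => Hf A B m j x * Wf A B i x) = fun x =>
      ∑ r ∈ Finset.range (m+1), ∑ l ∈ Finset.range (j+1), ∑ s ∈ Finset.range (i+1),
          ((Wcoef A B m r / m.factorial) * Wcoef ((m:ℝ)-r-1) r j l
             * (x ^ (((m:ℝ)-r-1) - l) * (1-x) ^ ((r:ℝ) - ((j-l:ℕ):ℝ))))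
          * (Wcoef A B i s * (x ^ (A - s) * (1-x) ^ (B - ((i-s:ℕ):ℝ)))) :=
    funext (HW_expand A B m i j)
  rw [hexp]
  have h0 : Tendsto (fun x : ℝ =>
      ∑ r ∈ Finset.range (m+1), ∑ l ∈ Finset.range (j+1), ∑ s ∈ Finset.range (i+1),
          ((Wcoef A B m r / m.factorial) * Wcoef ((m:ℝ)-r-1) r j l
             * (x ^ (((m:ℝ)-r-1) - l) * (1-x) ^ ((r:ℝ) - ((j-l:ℕ):ℝ))))
          * (Wcoef A B i s * (x ^ (A - s) * (1-x) ^ (B - ((i-s:ℕ):ℝ)))))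
      (𝓝[>] (0:ℝ)) (𝓝 (∑ _r ∈ Finset.range (m+1), ∑ _l ∈ Finset.range (j+1),
        ∑ _s ∈ Finset.range (i+1), (0:ℝ))) := by
    apply tendsto_finset_sum; intro r hr
    apply tendsto_finset_sum; intro l hl
    apply tendsto_finset_sum; intro s hs
    rw [Finset.mem_range, Nat.lt_succ_iff] at hr hl hs
    have h3 : (r:ℝ) ≤ m := Nat.cast_le.2 hr
    have h4 : (l:ℝ) ≤ j := Nat.cast_le.2 hl
    have h5 : (s:ℝ) ≤ i := Nat.cast_le.2 hs
    refine mono_mul_tendsto_left (Or.inr ?_); linarith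
  simpa using h0

lemma HW_tendsto_right (A B : ℝ) (m i j : ℕ) (hF : 0 < B - i) :
    Tendsto (fun x => Hf A B m j x * Wf A B i x) (𝓝[<] (1:ℝ)) (𝓝 0) := by
  have hexp : (fun x => Hf A B m j x * Wf A B i x) = fun x =>
      ∑ r ∈ Finset.range (m+1), ∑ l ∈ Finset.range (j+1), ∑ s ∈ Finset.range (i+1),
          ((Wcoef A B m r / m.factorial) * Wcoef ((m:ℝ)-r-1) r j l
             * (x ^ (((m:ℝ)-r-1) - l) * (1-x) ^ ((r:ℝ) - ((j-l:ℕ):ℝ))))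
          * (Wcoef A B i s * (x ^ (A - s) * (1-x) ^ (B - ((i-s:ℕ):ℝ)))) :=
    funext (HW_expand A B m i j)
  rw [hexp]
  have h0 : Tendsto (fun x : ℝ =>
      ∑ r ∈ Finset.range (m+1), ∑ l ∈ Finset.range (j+1), ∑ s ∈ Finset.range (i+1),
          ((Wcoef A B m r / m.factorial) * Wcoef ((m:ℝ)-r-1) r j l
             * (x ^ (((m:ℝ)-r-1) - l) * (1-x) ^ ((r:ℝ) - ((j-l:ℕ):ℝ))))
          * (Wcoef A B i s * (x ^ (A - s) * (1-x) ^ (B - ((i-s:ℕ):ℝ)))))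
      (𝓝[<] (1:ℝ)) (𝓝 (∑ _r ∈ Finset.range (m+1), ∑ _l ∈ Finset.range (j+1),
        ∑ _s ∈ Finset.range (i+1), (0:ℝ))) := by
    apply tendsto_finset_sum; intro r hr
    apply tendsto_finset_sum; intro l hl
    apply tendsto_finset_sum; intro s hs
    rw [Finset.mem_range, Nat.lt_succ_iff] at hr hl hs
    set c1 : ℝ := (Wcoef A B m r / m.factorial) * Wcoef ((m:ℝ)-r-1) r j l with hc1
    set c2 : ℝ := Wcoef A B i s with hc2
    by_cases hc : c1 * c2 = 0
    · exact mono_mul_tendsto_right (Or.inl hc)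
    · have hw : Wcoef ((m:ℝ)-r-1) (r:ℝ) j l ≠ 0 := fun h => hc (by rw [hc1, h]; ring)
      have h1 : ((j-l:ℕ):ℝ) ≤ (r:ℝ) := Nat.cast_le.2 (Wcoef_ne_imp hw)
      have h2 : ((i-s:ℕ):ℝ) ≤ (i:ℝ) := Nat.cast_le.2 (Nat.sub_le i s)
      refine mono_mul_tendsto_right (Or.inr ?_); linarith
  simpa using h0


lemma Hf_hasDerivAt (A B : ℝ) (m j : ℕ) {x : ℝ} (hx : x ∈ Set.Ioo (0:ℝ) 1) :
    HasDerivAt (Hf A B m j) (Hf A B m (j+1) x) x := by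
  unfold Hf
  exact HasDerivAt.fun_sum (fun r _ => (Wf_hasDerivAt _ _ j hx).const_mul _)

set_option maxHeartbeats 2000000 in
lemma IBP_chain (A B : ℝ) (m : ℕ) (hA0 : 0 < A - m) (hB0 : -1 < B - m) :
    ∀ j, j ≤ m → ∫ x in (0:ℝ)..1, Hf A B m 0 x * Wf A B m x
      = (-1)^j * ∫ x in (0:ℝ)..1, Hf A B m j x * Wf A B (m-j) x := by
  intro j
  induction j with
  | zero => intro _; simp
  | succ j ih =>
    intro hj1
    have hj : j < m := hj1
    have hmj : (((m - j : ℕ)):ℝ) = (m:ℝ) - j := by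
      rw [Nat.cast_sub hj.le]
    have hmj1 : (((m - (j+1) : ℕ)):ℝ) = (m:ℝ) - j - 1 := by
      rw [Nat.cast_sub hj1]; push_cast; ring
    have hsucc : (m - (j+1)) + 1 = m - j := by omega
    -- integrability of both pieces
    have hint1 : IntervalIntegrable (fun x => Hf A B m j x * Wf A B (m-j) x) volume 0 1 :=
      HW_integrable A B m (m-j) j (by rw [hmj]; linarith) (by rw [hmj]; linarith)
    have hint2 : IntervalIntegrable
        (fun x => Hf A B m (j+1) x * Wf A B (m-(j+1)) x) volume 0 1 :=
      HW_integrable A B m (m-(j+1)) (j+1) (by rw [hmj1]; push_cast; linarith)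
        (by rw [hmj1]; linarith)
    have hibp := myIBP (u := Hf A B m j) (v := Wf A B (m-(j+1)))
      (u' := Hf A B m (j+1)) (v' := Wf A B (m-j))
      (fun x hx => Hf_hasDerivAt A B m j hx)
      (fun x hx => by
        have := Wf_hasDerivAt A B (m-(j+1)) hx
        rwa [hsucc] at this)
      (hint2.add hint1)
      (HW_tendsto_left A B m (m-(j+1)) j (by rw [hmj1]; linarith))
      (HW_tendsto_right A B m (m-(j+1)) j (by rw [hmj1]; linarith))
    rw [sub_zero] at hibp
    have hsplit := intervalIntegral.integral_add hint2 hint1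
    rw [hsplit] at hibp
    have hstep : ∫ x in (0:ℝ)..1, Hf A B m j x * Wf A B (m-j) x
        = - ∫ x in (0:ℝ)..1, Hf A B m (j+1) x * Wf A B (m-(j+1)) x := by
      linarith [hibp]
    rw [ih hj.le, hstep]
    ring

lemma ffall_neg_one (l : ℕ) : ffall (-1 : ℝ) l = (-1)^l * l.factorial := by
  induction l with
  | zero => simp [ffall_zero]
  | succ l ih =>
    rw [ffall_succ, ih, Nat.factorial_succ]
    push_cast
    ring

lemma ffall_natCast_fact {N : ℕ} : ∀ s ≤ N, ffall (N:ℝ) s * ((N-s).factorial : ℝ)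
    = (N.factorial : ℝ) := by
  intro s
  induction s with
  | zero => simp [ffall_zero]
  | succ s ih =>
    intro hs
    have hs' : s ≤ N := by omega
    have h1 : (N:ℝ) - s = ((N - s : ℕ) : ℝ) := by rw [Nat.cast_sub hs']
    have h2 : (N - s) = (N - (s+1)) + 1 := by omega
    rw [ffall_succ, h1, mul_assoc, ← ih hs', h2, Nat.factorial_succ]
    push_cast
    ring

lemma Wf_neg_one (m : ℕ) {x : ℝ} (hx : x ∈ Set.Ioo (0:ℝ) 1) :
    Wf (-1 : ℝ) (m:ℝ) m x = (-1:ℝ)^m * m.factorial * x ^ (-(m:ℝ)-1) := by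
  unfold Wf
  have hterm : ∀ l ∈ Finset.range (m+1),
      Wcoef (-1) (m:ℝ) m l * (x ^ ((-1:ℝ) - l) * (1-x) ^ ((m:ℝ) - ((m-l:ℕ):ℝ)))
        = ((-1:ℝ)^m * m.factorial * x ^ (-(m:ℝ)-1))
            * ((1-x)^l * x^(m-l) * (m.choose l : ℝ)) := by
    intro l hl
    have hlm : l ≤ m := Nat.lt_succ_iff.mp (Finset.mem_range.mp hl)
    have hfact : ffall (m:ℝ) (m-l) * ((l).factorial : ℝ) = (m.factorial : ℝ) := by
      have := ffall_natCast_fact (N := m) (m-l) (Nat.sub_le m l)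
      rwa [show m - (m-l) = l by omega] at this
    have hl0 : ((l).factorial : ℝ) ≠ 0 := Nat.cast_ne_zero.2 (Nat.factorial_ne_zero l)
    have hffall : ffall (m:ℝ) (m-l) = (m.factorial : ℝ) / (l.factorial : ℝ) := by
      field_simp [← hfact]
      exact hfact
    have hsign : (-1:ℝ)^l * (-1:ℝ)^(m-l) = (-1:ℝ)^m := by
      rw [← pow_add]; congr 1; omega
    have hcast : (m:ℝ) - ((m-l:ℕ):ℝ) = (l:ℝ) := by
      rw [Nat.cast_sub hlm]; ring
    have hx1 : x ^ ((-1:ℝ) - l) = x ^ (-(m:ℝ)-1) * x ^ ((m-l : ℕ)) := by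
      rw [← Real.rpow_natCast x (m-l), ← Real.rpow_add hx.1]
      congr 1
      rw [Nat.cast_sub hlm]
      ring
    rw [Wcoef, ffall_neg_one, hffall, hcast, Real.rpow_natCast, hx1, ← hsign]
    field_simp
  rw [Finset.sum_congr rfl hterm, ← Finset.mul_sum]
  have hbin : ∑ l ∈ Finset.range (m+1), (1-x)^l * x^(m-l) * (m.choose l : ℝ) = 1 := by
    rw [← add_pow]
    norm_num
  rw [hbin, mul_one]

lemma Wcoef_self (a b : ℝ) (m : ℕ) : Wcoef a b m m = ffall a m := by
  simp [Wcoef, ffall_zero]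

lemma Wf_zero' (a b : ℝ) (x : ℝ) : Wf a b 0 x = x ^ a * (1-x) ^ b := by
  simp [Wf, Wcoef, ffall_zero]

lemma Hf_top (A B : ℝ) (m : ℕ) {x : ℝ} (hx : x ∈ Set.Ioo (0:ℝ) 1) :
    Hf A B m m x = ffall A m * (-1:ℝ)^m * x ^ (-(m:ℝ)-1) := by
  unfold Hf
  rw [Finset.sum_range_succ]
  have hvanish : ∀ r ∈ Finset.range m,
      (Wcoef A B m r / m.factorial) * Wf ((m:ℝ)-r-1) r m x = 0 := by
    intro r hr
    have hrm : r < m := Finset.mem_range.mp hr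
    have hcast : (m:ℝ) - r - 1 = ((m - r - 1 : ℕ) : ℝ) := by
      rw [Nat.cast_sub (by omega : 1 ≤ m - r), Nat.cast_sub hrm.le]
      push_cast; ring
    rw [hcast]
    have hW : Wf ((m - r - 1 : ℕ) : ℝ) r m x = 0 := by
      unfold Wf
      apply Finset.sum_eq_zero
      intro l _
      by_cases hcase : r < m - l
      · rw [Wcoef, ffall_natCast_eq_zero hcase]
        simp
      · have hlt : (m - r - 1 : ℕ) < l := by omega
        rw [Wcoef, ffall_natCast_eq_zero hlt]
        simp
    rw [hW, mul_zero]
  rw [Finset.sum_eq_zero hvanish, zero_add]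
  have hAm : (m:ℝ) - m - 1 = -1 := by ring
  rw [hAm, Wf_neg_one m hx, Wcoef_self]
  field_simp [Nat.factorial_ne_zero]

lemma ae_ne_one : ∀ᵐ (x:ℝ) ∂volume, x ≠ 1 := by
  rw [ae_iff]
  have : {x : ℝ | ¬ x ≠ 1} = {1} := by ext y; simp
  rw [this]
  exact measure_singleton 1

lemma final_integral (A B : ℝ) (m : ℕ) (hE : -1 < A - m - 1) (hB : -1 < B) :
    ∫ x in (0:ℝ)..1, Hf A B m m x * Wf A B 0 x
      = ffall A m * (-1:ℝ)^m *
        (Real.Gamma (A - m) * Real.Gamma (B+1) / Real.Gamma (A - m + B + 1)) := by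
  have hcong : ∫ x in (0:ℝ)..1, Hf A B m m x * Wf A B 0 x
      = ∫ x in (0:ℝ)..1, (ffall A m * (-1:ℝ)^m) * (x ^ (A - m - 1) * (1-x) ^ B) := by
    apply intervalIntegral.integral_congr_ae
    filter_upwards [ae_ne_one] with x hx1 hmem
    rw [Set.uIoc_of_le (by norm_num : (0:ℝ) ≤ 1)] at hmem
    have hxi : x ∈ Set.Ioo (0:ℝ) 1 := ⟨hmem.1, lt_of_le_of_ne hmem.2 hx1⟩
    rw [Hf_top A B m hxi, Wf_zero']
    rw [show A - (m:ℝ) - 1 = (-(m:ℝ)-1) + A from by ring, Real.rpow_add hxi.1]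
    ring
  rw [hcong, intervalIntegral.integral_const_mul, betaInt_value hE hB,
    show A - (m:ℝ) - 1 + 1 = A - m from by ring,
    show A - (m:ℝ) - 1 + B + 2 = A - m + B + 1 from by ring]

lemma ffall_Gamma {c : ℝ} : ∀ (m : ℕ), 0 < c + 1 - m →
    ffall c m * Real.Gamma (c + 1 - m) = Real.Gamma (c + 1) := by
  intro m
  induction m with
  | zero => intro _; simp [ffall_zero]
  | succ m ih =>
    intro h
    have h1 : (0:ℝ) < c - m := by push_cast at h ⊢; linarith
    have h2 : c + 1 - ((m+1:ℕ):ℝ) = c - m := by push_cast; ring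
    rw [ffall_succ, h2, mul_assoc, ← Real.Gamma_add_one h1.ne']
    rw [show c - (m:ℝ) + 1 = c + 1 - m from by ring]
    exact ih (by linarith)



/-- Alternative Jacobi polynomials defined by the Rodrigues-type formula. -/
noncomputable def altJacobi (α β : ℝ) (n k : ℕ) (x : ℝ) : ℝ :=
  x ^ (-α - k - 1 : ℝ) * (1 - x) ^ (-β : ℝ) / (n - k).factorial *
    iteratedDeriv (n - k)
      (fun y : ℝ => y ^ (α + n + k + 1 : ℝ) * (1 - y) ^ (β + n - k : ℝ)) x


lemma Hf_zero_eq (A B : ℝ) (m : ℕ) (x : ℝ) :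
    Hf A B m 0 x = ∑ r ∈ Finset.range (m+1),
      (Wcoef A B m r / m.factorial) * (x ^ ((m:ℝ)-r-1) * (1-x) ^ ((r:ℕ):ℝ)) :=
  Finset.sum_congr rfl (fun r _ => by rw [Wf_zero'])

lemma integrand_eq (α β : ℝ) (n k : ℕ) (hk : k ≤ n) {x : ℝ} (hx : x ∈ Set.Ioo (0:ℝ) 1) :
    x ^ α * (1 - x) ^ β * (altJacobi α β n k x) ^ 2
      = Hf (α+n+k+1) (β+n-k) (n-k) 0 x * Wf (α+n+k+1) (β+n-k) (n-k) x
          / (n-k).factorial := by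
  have hx0 := hx.1
  have hx1 : (0:ℝ) < 1 - x := by linarith [hx.2]
  unfold altJacobi
  set m := n - k with hm
  set A : ℝ := α+n+k+1 with hA
  set B : ℝ := β+n-k with hB
  have hmR : ((m:ℕ):ℝ) = (n:ℝ) - k := by rw [hm, Nat.cast_sub hk]
  have hfac : ((m.factorial : ℕ):ℝ) ≠ 0 := Nat.cast_ne_zero.2 (Nat.factorial_ne_zero m)
  rw [iter_eq_Wf A B m hx]
  have hH0 : Hf A B m 0 x * (m.factorial:ℝ)
      = x ^ (-α-2*(k:ℝ)-2) * ((1-x)^(-β) * Wf A B m x) := by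
    rw [Hf_zero_eq, Wf, Finset.sum_mul, Finset.mul_sum, Finset.mul_sum]
    apply Finset.sum_congr rfl
    intro r hr
    have hrm : r ≤ m := Nat.lt_succ_iff.mp (Finset.mem_range.mp hr)
    have c1 : x ^ (-α-2*(k:ℝ)-2) * x ^ (A-(r:ℝ)) = x ^ ((m:ℝ)-r-1) := by
      rw [← Real.rpow_add hx0]; congr 1; rw [hmR, hA]; ring
    have c2 : (1-x) ^ (-β) * (1-x) ^ (B - ((m-r:ℕ):ℝ)) = (1-x) ^ ((r:ℕ):ℝ) := by
      rw [← Real.rpow_add hx1]; congr 1; rw [Nat.cast_sub hrm, hmR, hB]; ring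
    rw [← c1, ← c2]
    field_simp
  rw [pow_two]
  have c3 : x ^ α * (x ^ (-α-(k:ℝ)-1) * x ^ (-α-(k:ℝ)-1)) = x ^ (-α-2*(k:ℝ)-2) := by
    rw [← Real.rpow_add hx0, ← Real.rpow_add hx0]; congr 1; ring
  have c4 : (1-x) ^ β * ((1-x) ^ (-β) * (1-x) ^ (-β)) = (1-x) ^ (-β) := by
    rw [← Real.rpow_add hx1, ← Real.rpow_add hx1]; congr 1; ring
  calc x ^ α * (1-x) ^ β *
        (x ^ (-α - (k:ℝ) - 1) * (1-x) ^ (-β) / (m.factorial:ℝ) * Wf A B m x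
          * (x ^ (-α - (k:ℝ) - 1) * (1-x) ^ (-β) / (m.factorial:ℝ) * Wf A B m x))
      = (x ^ α * (x ^ (-α-(k:ℝ)-1) * x ^ (-α-(k:ℝ)-1)))
          * ((1-x) ^ β * ((1-x) ^ (-β) * (1-x) ^ (-β)))
          * (Wf A B m x * Wf A B m x) / ((m.factorial:ℝ) * (m.factorial:ℝ)) := by
        ring
    _ = x ^ (-α-2*(k:ℝ)-2) * ((1-x)^(-β) * Wf A B m x)
          * Wf A B m x / ((m.factorial:ℝ) * (m.factorial:ℝ)) := by
        rw [c3, c4]; ring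
    _ = Hf A B m 0 x * (m.factorial:ℝ)
          * Wf A B m x / ((m.factorial:ℝ) * (m.factorial:ℝ)) := by rw [hH0]
    _ = Hf A B m 0 x * Wf A B m x / (m.factorial:ℝ) := by
        field_simp

theorem stmt_4 (n k : ℕ) (hk : k ≤ n) (α β : ℝ) (hα : α > -1) (hβ : β > -1) :
    ∫ x in (0 : ℝ)..1,
      x ^ α * (1 - x) ^ β * (altJacobi α β n k x) ^ 2 =
        (1 / (α + 2 * k + 1)) *
          (Real.Gamma (α + n + k + 2) * Real.Gamma (β + n - k + 1) /
            ((n - k).factorial * Real.Gamma (α + β + n + k + 2))) := by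
  have hcong : ∫ x in (0 : ℝ)..1, x ^ α * (1 - x) ^ β * (altJacobi α β n k x) ^ 2
      = ∫ x in (0 : ℝ)..1, Hf (α+n+k+1) (β+n-k) (n-k) 0 x
          * Wf (α+n+k+1) (β+n-k) (n-k) x / (n-k).factorial := by
    apply intervalIntegral.integral_congr_ae
    filter_upwards [ae_ne_one] with x hx1 hmem
    rw [Set.uIoc_of_le (by norm_num : (0:ℝ) ≤ 1)] at hmem
    exact integrand_eq α β n k hk ⟨hmem.1, lt_of_le_of_ne hmem.2 hx1⟩
  rw [hcong]
  set m := n - k with hm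
  set A : ℝ := α+n+k+1 with hA
  set B : ℝ := β+n-k with hB
  have hmR : ((m:ℕ):ℝ) = (n:ℝ) - k := by rw [hm, Nat.cast_sub hk]
  have hk0 : (0:ℝ) ≤ k := Nat.cast_nonneg k
  have hkn : (k:ℝ) ≤ n := Nat.cast_le.2 hk
  have hA0 : 0 < A - m := by rw [hmR, hA]; linarith
  have hB0 : -1 < B - m := by rw [hmR, hB]; linarith
  have hchain := IBP_chain A B m hA0 hB0 m le_rfl
  rw [Nat.sub_self] at hchain
  have hfin := final_integral A B m (by rw [hmR, hA]; linarith) (by rw [hB]; linarith)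
  simp only [intervalIntegral.integral_div]
  rw [hchain, hfin]
  have hsq : (-1:ℝ)^m * ((-1:ℝ)^m) = 1 := by
    rw [← pow_add, ← two_mul, pow_mul]
    norm_num
  have hGA : ffall A m * Real.Gamma (A + 1 - m) = Real.Gamma (A + 1) :=
    ffall_Gamma m (by rw [hmR, hA]; linarith)
  have hAm1 : Real.Gamma (A + 1 - m) = (A - m) * Real.Gamma (A - m) := by
    rw [show A + 1 - (m:ℝ) = (A - m) + 1 from by ring]
    exact Real.Gamma_add_one hA0.ne'
  have hGpos1 : 0 < Real.Gamma (A - m) := Real.Gamma_pos_of_pos hA0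
  have hGpos2 : 0 < Real.Gamma (A - m + B + 1) := by
    apply Real.Gamma_pos_of_pos
    rw [hmR, hA, hB]
    have : (0:ℝ) ≤ n := Nat.cast_nonneg n
    linarith
  have hfac : ((m.factorial : ℕ):ℝ) ≠ 0 := Nat.cast_ne_zero.2 (Nat.factorial_ne_zero m)
  -- identify the Gammas in the goal
  have e1 : α + (n:ℝ) + k + 2 = A + 1 := by rw [hA]; ring
  have e2 : β + (n:ℝ) - k + 1 = B + 1 := by rw [hB]
  have e3 : α + β + (n:ℝ) + k + 2 = A - m + B + 1 := by rw [hA, hB, hmR]; ring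
  have e4 : α + 2 * (k:ℝ) + 1 = A - m := by rw [hA, hmR]; ring
  rw [e1, e2, e3, e4]
  have hffall : ffall A m = Real.Gamma (A + 1) / ((A - m) * Real.Gamma (A - m)) := by
    rw [← hGA, hAm1]
    field_simp
  have collapse : ∀ V : ℝ, (-1:ℝ)^m * (ffall A m * (-1:ℝ)^m * V) = ffall A m * V := by
    intro V
    calc (-1:ℝ)^m * (ffall A m * (-1:ℝ)^m * V)
        = (ffall A m * V) * ((-1:ℝ)^m * ((-1:ℝ)^m)) := by ring
      _ = ffall A m * V := by rw [hsq, mul_one]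
  rw [collapse, hffall]
  clear_value A B m
  field_simp
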